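/- The Cartesian product E₁ × ⋯ × Eₙ ⊂ ℂⁿ of compact sets Eⱼ ⊂ ℂ, each of logarithmic capacity zero, is a compact complete pluripolar subset of ℂⁿ: there exists a plurisubharmonic function φ on ℂⁿ with φ⁻¹(-∞) = E₁ × ⋯ × Eₙ. -/

import Mathlib

open Complex Topology Filter Metric MeasureTheory Set

noncomputable section

/-- Subharmonicity on a subset of `ℂ`: upper semicontinuity together with
majorization by real parts of holomorphic polynomials on closed discs
(the classical harmonic-majorant characterization). -/
def SubharmonicOn (u : ℂ → EReal) (s : Set ℂ) : Prop :=
  UpperSemicontinuousOn u s ∧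
  ∀ (c : ℂ) (r : ℝ), 0 < r → Metric.closedBall c r ⊆ s →
    ∀ p : Polynomial ℂ,
      (∀ z ∈ Metric.sphere c r, u z ≤ ((p.eval z).re : EReal)) →
      ∀ z ∈ Metric.closedBall c r, u z ≤ ((p.eval z).re : EReal)

/-- Plurisubharmonicity on a subset of a complex normed space:
upper semicontinuity and subharmonicity along every complex line. -/
def PlurisubharmonicOn {E : Type*} [NormedAddCommGroup E] [NormedSpace ℂ E]
    (u : E → EReal) (Ω : Set E) : Prop :=
  UpperSemicontinuousOn u Ω ∧
  ∀ z w : E, SubharmonicOn (fun t : ℂ => u (z + t • w)) {t : ℂ | z + t • w ∈ Ω}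

/-- A function is pluriharmonic on `Ω` if it is locally the real part of
a holomorphic function. -/
def PluriharmonicOn {E : Type*} [NormedAddCommGroup E] [NormedSpace ℂ E]
    (h : E → ℝ) (Ω : Set E) : Prop :=
  ∀ z ∈ Ω, ∃ U : Set E, IsOpen U ∧ z ∈ U ∧ U ⊆ Ω ∧
    ∃ f : E → ℂ, DifferentiableOn ℂ f U ∧ ∀ w ∈ U, h w = (f w).re

/-- `K` is complete pluripolar in `S`: every point of `K` has a neighborhood
`U ⊆ S` and a plurisubharmonic function `φ` on `U` with `K ∩ U = φ⁻¹(-∞)`. -/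
def CompletePluripolarIn {E : Type*} [NormedAddCommGroup E] [NormedSpace ℂ E]
    (K S : Set E) : Prop :=
  ∀ z ∈ K, ∃ U : Set E, IsOpen U ∧ z ∈ U ∧ U ⊆ S ∧
    ∃ φ : E → EReal, PlurisubharmonicOn φ U ∧ K ∩ U = {w ∈ U | φ w = ⊥}

/-- The Levi form of a real-valued function `φ` at `z` in the complex direction `v`:
`∂∂̄φ(z)(v,v̄)`, computed as one quarter of the Laplacian of `t ↦ φ (z + t v)` at `t = 0`. -/
def leviForm {E : Type*} [NormedAddCommGroup E] [NormedSpace ℂ E]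
    (φ : E → ℝ) (z v : E) : ℝ :=
  (1/4) * ((iteratedFDeriv ℝ 2 (fun t : ℂ => φ (z + t • v)) 0) ![1, 1]
        + (iteratedFDeriv ℝ 2 (fun t : ℂ => φ (z + t • v)) 0) ![Complex.I, Complex.I])

/-- The Wirtinger derivative `∂φ(z)(v) = Σ vⱼ ∂φ/∂zⱼ` of a real-valued function
in the complex direction `v`. -/
def wirtDeriv {E : Type*} [NormedAddCommGroup E] [NormedSpace ℂ E]
    (φ : E → ℝ) (z v : E) : ℂ :=
  (1/2 : ℂ) * ((fderiv ℝ φ z v : ℝ) - Complex.I * ((fderiv ℝ φ z (Complex.I • v) : ℝ) : ℂ))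

end

/-- Minimum principle for real parts of polynomials, via `exp`. -/
lemma min_principle (p : Polynomial ℂ) (c₀ : ℂ) (r : ℝ) (hr : 0 < r) (c : ℝ)
    (hb : ∀ z ∈ Metric.sphere c₀ r, c ≤ (p.eval z).re) :
    ∀ z ∈ Metric.closedBall c₀ r, c ≤ (p.eval z).re := by
  intro z hz
  have hd : DiffContOnCl ℂ (fun z => Complex.exp (-(p.eval z))) (Metric.ball c₀ r) :=
    Differentiable.diffContOnCl (by
      exact ((p.differentiable).neg).cexp)
  have hnorm : ∀ w : ℂ, ‖Complex.exp (-(p.eval w))‖ = Real.exp (-(p.eval w).re) := by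
    intro w
    rw [Complex.norm_exp]
    simp
  have key : ‖Complex.exp (-(p.eval z))‖ ≤ Real.exp (-c) := by
    refine Complex.norm_le_of_forall_mem_frontier_norm_le isBounded_ball hd ?_ ?_
    · intro w hw
      rw [frontier_ball c₀ hr.ne'] at hw
      rw [hnorm]
      exact Real.exp_le_exp.2 (by linarith [hb w hw])
    · rwa [closure_ball c₀ hr.ne']
  rw [hnorm] at key
  have := Real.exp_le_exp.1 key
  linarith

/-- Composition of a subharmonic function with an affine map `t ↦ a + t * b`. -/
lemma subharmonic_comp_affine {u : ℂ → EReal} (hu : SubharmonicOn u univ) (a b : ℂ) :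
    SubharmonicOn (fun t : ℂ => u (a + t * b)) univ := by
  constructor
  · -- upper semicontinuity
    intro x _ y hy
    have hc : ContinuousAt (fun t : ℂ => a + t * b) x := by fun_prop
    have h : ∀ᶠ z in 𝓝[univ] (a + x * b), u z < y := hu.1 (a + x * b) (mem_univ _) y hy
    rw [nhdsWithin_univ] at h
    rw [nhdsWithin_univ]
    exact hc.eventually h
  · intro c r hr _ p hp
    rcases eq_or_ne b 0 with hb | hb
    · -- constant along the line
      simp only [hb, mul_zero, add_zero] at hp ⊢
      intro z hz
      obtain hua | hua | ⟨c', hua⟩ : u a = ⊥ ∨ u a = ⊤ ∨ ∃ c' : ℝ, u a = c' := by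
        induction u a using EReal.rec with
        | bot => exact Or.inl rfl
        | coe x => exact Or.inr (Or.inr ⟨x, rfl⟩)
        | top => exact Or.inr (Or.inl rfl)
      · rw [hua]; exact bot_le
      · exfalso
        have hmem : (c + r : ℂ) ∈ Metric.sphere c r := by
          simp [Complex.dist_eq, abs_of_pos hr]
        have := hp _ hmem
        rw [hua] at this
        exact (EReal.coe_lt_top _).not_ge this
      · rw [hua] at hp ⊢
        have hb' : ∀ w ∈ Metric.sphere c r, c' ≤ (p.eval w).re := by
          intro w hw
          exact_mod_cast hp w hw
        exact_mod_cast min_principle p c r hr c' hb' z hz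
    · -- nonconstant: transform the polynomial
      set q : Polynomial ℂ := p.comp (Polynomial.C b⁻¹ * (Polynomial.X - Polynomial.C a))
      have hq : ∀ z : ℂ, q.eval z = p.eval (b⁻¹ * (z - a)) := by
        intro z; simp [q, Polynomial.eval_comp]
      have key := hu.2 (a + c * b) (r * ‖b‖) (mul_pos hr (norm_pos_iff.2 hb)) (subset_univ _) q ?_
      · intro z hz
        have hmem : a + z * b ∈ Metric.closedBall (a + c * b) (r * ‖b‖) := by
          rw [Metric.mem_closedBall] at hz ⊢
          have : dist (a + z * b) (a + c * b) = dist z c * ‖b‖ := by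
            rw [dist_eq_norm, dist_eq_norm, ← norm_mul]
            congr 1; ring
          rw [this]
          exact mul_le_mul_of_nonneg_right hz (norm_nonneg b)
        have := key _ hmem
        rwa [hq, show b⁻¹ * (a + z * b - a) = z by field_simp; ring] at this
      · intro w hw
        have hmem : b⁻¹ * (w - a) ∈ Metric.sphere c r := by
          rw [Metric.mem_sphere] at hw ⊢
          have : dist (b⁻¹ * (w - a)) c = dist w (a + c * b) / ‖b‖ := by
            rw [Complex.dist_eq, Complex.dist_eq, eq_div_iff (by simpa using hb)]
            rw [← norm_mul]
            congr 1
            field_simp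
            ring
          rw [this, hw]
          exact mul_div_cancel_right₀ r (norm_ne_zero_iff.2 hb)
        have := hp _ hmem
        rw [hq]
        calc u w = u (a + (b⁻¹ * (w - a)) * b) := by field_simp; congr 1; ring
          _ ≤ _ := this

/-- Supremum over `Fin n` of subharmonic functions is subharmonic. -/
lemma subharmonic_iSup {n : ℕ} {f : Fin n → ℂ → EReal}
    (hf : ∀ j, SubharmonicOn (f j) univ) :
    SubharmonicOn (fun t => ⨆ j, f j t) univ := by
  constructor
  · intro x _ y hy
    have h1 : ∀ j, ∀ᶠ z in 𝓝 x, f j z < y := by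
      intro j
      have h : ∀ᶠ z in 𝓝[univ] x, f j z < y :=
        (hf j).1 x (mem_univ _) y ((le_iSup (fun j => f j x) j).trans_lt hy)
      rwa [nhdsWithin_univ] at h
    rw [nhdsWithin_univ]
    filter_upwards [eventually_all.2 h1] with z hz
    have hbot : (⊥ : EReal) < y := (bot_le.trans_lt hy)
    calc (⨆ j, f j z) ≤ Finset.univ.sup (fun j => f j z) := by
          apply iSup_le; intro j; exact Finset.le_sup (f := fun j => f j z) (Finset.mem_univ j)
      _ < y := (Finset.sup_lt_iff hbot).2 (fun j _ => hz j)
  · intro c r hr _ p hp z hz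
    apply iSup_le
    intro j
    exact (hf j).2 c r hr (subset_univ _) p
      (fun w hw => (le_iSup (fun j => f j w) j).trans (hp w hw)) z hz

/-- The Cartesian product of compact sets `Eⱼ ⊆ ℂ` of logarithmic capacity zero
(i.e. each is the `-∞` set of a global subharmonic function) is a compact complete
pluripolar subset of `ℂⁿ`: it is the `-∞` set of a global plurisubharmonic function. -/
theorem product_capacity_zero_complete_pluripolar
    {n : ℕ} (E : Fin n → Set ℂ) (hcpt : ∀ j, IsCompact (E j))
    (hcap : ∀ j, ∃ u : ℂ → EReal, SubharmonicOn u univ ∧ (∃ z, u z ≠ ⊥) ∧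
      E j = u ⁻¹' {⊥}) :
    IsCompact {z : Fin n → ℂ | ∀ j, z j ∈ E j} ∧
    ∃ φ : (Fin n → ℂ) → EReal, PlurisubharmonicOn φ univ ∧
      φ ⁻¹' {⊥} = {z : Fin n → ℂ | ∀ j, z j ∈ E j} := by
  choose u hu hne hE using hcap
  refine ⟨?_, ?_⟩
  · have : {z : Fin n → ℂ | ∀ j, z j ∈ E j} = Set.pi univ E := by
      ext z; simp [Set.mem_pi]
    rw [this]
    exact isCompact_univ_pi hcpt
  · refine ⟨fun z => ⨆ j, u j (z j), ⟨?_, ?_⟩, ?_⟩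
    · -- USC on univ
      intro x _ y hy
      have h1 : ∀ j, ∀ᶠ z in 𝓝 x, u j (z j) < y := by
        intro j
        have husc : ∀ᶠ w in 𝓝[univ] (x j), u j w < y :=
          (hu j).1 (x j) (mem_univ _) y ((le_iSup (fun j => u j (x j)) j).trans_lt hy)
        rw [nhdsWithin_univ] at husc
        exact (continuous_apply j).continuousAt.eventually husc
      rw [nhdsWithin_univ]
      filter_upwards [eventually_all.2 h1] with z hz
      have hbot : (⊥ : EReal) < y := bot_le.trans_lt hy
      calc (⨆ j, u j (z j)) ≤ Finset.univ.sup (fun j => u j (z j)) := by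
            apply iSup_le; intro j; exact Finset.le_sup (f := fun j => u j (z j)) (Finset.mem_univ j)
        _ < y := (Finset.sup_lt_iff hbot).2 (fun j _ => hz j)
    · -- along lines
      intro z w
      have : {t : ℂ | z + t • w ∈ univ} = univ := by simp
      rw [this]
      exact subharmonic_iSup (fun j => subharmonic_comp_affine (hu j) (z j) (w j))
    · ext z
      simp only [Set.mem_preimage, Set.mem_singleton_iff, Set.mem_setOf_eq, iSup_eq_bot]
      refine forall_congr' fun j => ?_
      rw [hE j]
      exact Iff.rfl
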